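/- Let W = GF(2^5) as a vector space over GF(2) and let U be a 3-dimensional GF(2)-subspace of W. Then the Bu construction yields a vector space partition of V(8,2) = W × U of type [3^{32} 5^1]: thirty-two 3-dimensional subspaces U_α = {(αu,u) : u ∈ U} for α ∈ GF(32), together with the 5-dimensional subspace W × {0}. -/

import Mathlib

/-- A vector space partition: a collection of nonzero subspaces such that every
nonzero vector lies in exactly one member. -/
def IsVSPartition {F V : Type*} [Field F] [AddCommGroup V] [Module F V]
    (P : Set (Submodule F V)) : Prop :=
  ⊥ ∉ P ∧ ∀ v : V, v ≠ 0 → ∃! U, U ∈ P ∧ v ∈ U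

/-- The Bu construction with W = GF(32) and U a 3-dimensional GF(2)-subspace of W
yields a vector space partition of V(8,2) = W × U of type [3^32 5^1]: the thirty-two
subspaces U_α = {(αu, u) : u ∈ U}, α ∈ GF(32), of dimension 3, together with the
5-dimensional subspace W × {0}. -/
theorem bu_construction_V82
    (K : Type*) [Field K] [Fintype K] [Algebra (ZMod 2) K]
    (hK : Fintype.card K = 32)
    (U : Submodule (ZMod 2) K) (hU : Module.finrank (ZMod 2) U = 3)
    (Ua : K → Submodule (ZMod 2) (K × ↥U))
    (hUa : ∀ α : K, Ua α =
      LinearMap.range (((LinearMap.mulLeft (ZMod 2) α).comp U.subtype).prod LinearMap.id))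
    (W₀ : Submodule (ZMod 2) (K × ↥U))
    (hW₀ : W₀ = LinearMap.range (LinearMap.inl (ZMod 2) K ↥U)) :
    Module.finrank (ZMod 2) (K × ↥U) = 8 ∧
      IsVSPartition (Set.range Ua ∪ {W₀}) ∧
      Function.Injective Ua ∧
      (∀ α : K, Module.finrank (ZMod 2) ↥(Ua α) = 3) ∧
      Module.finrank (ZMod 2) ↥W₀ = 5 ∧
      W₀ ∉ Set.range Ua := by
  -- finrank of K over GF(2) is 5
  have hfK : Module.finrank (ZMod 2) K = 5 := by
    have h := Module.card_eq_pow_finrank (K := ZMod 2) (V := K)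
    rw [hK, ZMod.card] at h
    have h5 : (2:ℕ) ^ 5 = 2 ^ Module.finrank (ZMod 2) K := by rw [← h]; norm_num
    exact (Nat.pow_right_injective le_rfl h5).symm
  -- membership in Ua α
  have memUa : ∀ (α : K) (v : K × ↥U), v ∈ Ua α ↔ ∃ w : ↥U, α * (w : K) = v.1 ∧ w = v.2 := by
    intro α v
    rw [hUa]
    simp [LinearMap.mem_range, Prod.ext_iff]
  -- membership in W₀
  have memW₀ : ∀ v : K × ↥U, v ∈ W₀ ↔ v.2 = 0 := by
    intro v
    rw [hW₀]
    simp [LinearMap.mem_range, Prod.ext_iff, eq_comm]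
  -- finrank of each Ua α is 3
  have hfUa : ∀ α : K, Module.finrank (ZMod 2) ↥(Ua α) = 3 := by
    intro α
    rw [hUa]
    rw [LinearMap.finrank_range_of_inj, hU]
    intro a b hab
    simpa using congrArg Prod.snd hab
  -- finrank of W₀ is 5
  have hfW₀ : Module.finrank (ZMod 2) ↥W₀ = 5 := by
    rw [hW₀, LinearMap.finrank_range_of_inj, hfK]
    exact LinearMap.inl_injective
  -- finrank of the product is 8
  have hf8 : Module.finrank (ZMod 2) (K × ↥U) = 8 := by
    rw [Module.finrank_prod, hfK, hU]
  refine ⟨hf8, ⟨?_, ?_⟩, ?_, hfUa, hfW₀, ?_⟩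
  · -- ⊥ not in the family
    rintro (⟨α, hα⟩ | h)
    · have := hfUa α
      rw [hα, finrank_bot] at this
      exact absurd this (by norm_num)
    · rw [Set.mem_singleton_iff] at h
      rw [← h, finrank_bot] at hfW₀
      exact absurd hfW₀ (by norm_num)
  · -- every nonzero vector lies in exactly one member
    intro v hv
    by_cases h2 : v.2 = 0
    · -- v lies only in W₀
      refine ⟨W₀, ⟨Or.inr rfl, (memW₀ v).2 h2⟩, ?_⟩
      rintro S ⟨(⟨α, rfl⟩ | hS), hvS⟩
      · obtain ⟨w, hw1, hw2⟩ := (memUa α v).1 hvS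
        rw [h2] at hw2
        rw [hw2] at hw1
        simp at hw1
        exact absurd (Prod.ext hw1.symm h2) hv
      · exact hS
    · -- v lies only in Ua (v.1 / v.2)
      have hu : (v.2 : K) ≠ 0 := fun h => h2 (Subtype.ext h)
      refine ⟨Ua (v.1 * (v.2 : K)⁻¹), ⟨Or.inl ⟨_, rfl⟩, ?_⟩, ?_⟩
      · exact (memUa _ v).2 ⟨v.2, by field_simp, rfl⟩
      · rintro S ⟨(⟨β, rfl⟩ | hS), hvS⟩
        · obtain ⟨w, hw1, hw2⟩ := (memUa β v).1 hvS
          have : β = v.1 * (v.2 : K)⁻¹ := by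
            rw [hw2] at hw1
            field_simp [← hw1]
            exact hw1
          rw [this]
        · rw [Set.mem_singleton_iff] at hS
          rw [hS, memW₀] at hvS
          exact absurd hvS h2
  · -- Ua is injective
    intro α β hab
    haveI : Module.Finite (ZMod 2) ↥U := Module.Finite.of_finite
    have : Nontrivial ↥U := by
      rw [← Module.finrank_pos_iff (R := ZMod 2)]
      omega
    obtain ⟨u, hu0⟩ := exists_ne (0 : ↥U)
    have huK : (u : K) ≠ 0 := fun h => hu0 (Subtype.ext h)
    have h1 : ((α * (u : K), u) : K × ↥U) ∈ Ua α :=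
      (memUa α _).2 ⟨u, rfl, rfl⟩
    rw [hab] at h1
    obtain ⟨w, hw1, hw2⟩ := (memUa β _).1 h1
    simp only at hw1 hw2
    rw [hw2] at hw1
    exact (mul_right_cancel₀ huK hw1).symm
  · -- W₀ is not one of the Ua α
    rintro ⟨α, hα⟩
    rw [← hα, hfUa α] at hfW₀
    exact absurd hfW₀ (by norm_num)
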